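/- arXiv:1803.06279 — 5 statements merged into one kernel-verified Lean document; each statement's English description precedes it below -/
import Mathlib

section
/- Let d ≥ 1 and let B̄ ∈ M_d(ℂ) be a ladder matrix, i.e. B̄ = Σ_{k=1}^{d−1} b_k E_{k+1,k} with b_k ≠ 0 for every k ∈ {1,…,d−1}. If X ∈ M_d(ℂ) satisfies X·B̄ = B̄·X and X·B̄† = B̄†·X, then there exists λ ∈ ℂ such that X = λ·1_d. Equivalently, the commutant {B̄, B̄†}′ equals ℂ·1_d. (Proposition 1 of the paper.) -/
open Matrix

/-- A *ladder matrix* `B̄ ∈ M_d(ℂ)`: all entries vanish except the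
subdiagonal ones `B̄_{k+1,k}`, all of which are nonzero. -/
def IsLadder {d : ℕ} (B : Matrix (Fin d) (Fin d) ℂ) : Prop :=
  (∀ i j : Fin d, (i : ℕ) ≠ (j : ℕ) + 1 → B i j = 0) ∧
  ∀ (j : Fin d) (h : (j : ℕ) + 1 < d), B ⟨(j : ℕ) + 1, h⟩ j ≠ 0

/-- Proposition 1: the commutant of `{B̄, B̄†}` is trivial for a ladder matrix `B̄`. -/
theorem commutant_of_ladder_trivial {d : ℕ} (hd : 1 ≤ d)
    (B : Matrix (Fin d) (Fin d) ℂ) (hB : IsLadder B)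
    (X : Matrix (Fin d) (Fin d) ℂ)
    (h1 : X * B = B * X) (h2 : X * Bᴴ = Bᴴ * X) :
    ∃ c : ℂ, X = c • (1 : Matrix (Fin d) (Fin d) ℂ) := by
  obtain ⟨hz, hnz⟩ := hB
  -- entry formulas
  have hXB : ∀ (i j : Fin d) (h : (j : ℕ) + 1 < d),
      (X * B) i j = X i ⟨(j : ℕ) + 1, h⟩ * B ⟨(j : ℕ) + 1, h⟩ j := by
    intro i j h
    rw [mul_apply]
    apply Finset.sum_eq_single (⟨(j : ℕ) + 1, h⟩ : Fin d)
    · intro k _ hk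
      rw [hz k j (by simpa [Fin.ext_iff] using hk), mul_zero]
    · intro hk; exact absurd (Finset.mem_univ _) hk
  have hXB0 : ∀ (i j : Fin d), ¬ ((j : ℕ) + 1 < d) → (X * B) i j = 0 := by
    intro i j h
    rw [mul_apply]
    apply Finset.sum_eq_zero
    intro k _
    rw [hz k j (by have := k.isLt; omega), mul_zero]
  have hBX : ∀ (i j : Fin d) (h : 0 < (i : ℕ)),
      (B * X) i j = B i ⟨(i : ℕ) - 1, lt_of_le_of_lt (Nat.sub_le _ _) i.isLt⟩ *
        X ⟨(i : ℕ) - 1, lt_of_le_of_lt (Nat.sub_le _ _) i.isLt⟩ j := by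
    intro i j h
    rw [mul_apply]
    apply Finset.sum_eq_single (⟨(i : ℕ) - 1, lt_of_le_of_lt (Nat.sub_le _ _) i.isLt⟩ : Fin d)
    · intro k _ hk
      rw [hz i k (by intro hcon; exact hk (Fin.ext (show (k:ℕ) = (i:ℕ) - 1 by omega))), zero_mul]
    · intro hk; exact absurd (Finset.mem_univ _) hk
  have hBX0 : ∀ (i j : Fin d), (i : ℕ) = 0 → (B * X) i j = 0 := by
    intro i j h
    rw [mul_apply]
    apply Finset.sum_eq_zero
    intro k _
    rw [hz i k (by omega), zero_mul]
  have hXBH : ∀ (i j : Fin d) (h : 0 < (j : ℕ)),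
      (X * Bᴴ) i j = X i ⟨(j : ℕ) - 1, lt_of_le_of_lt (Nat.sub_le _ _) j.isLt⟩ *
        star (B j ⟨(j : ℕ) - 1, lt_of_le_of_lt (Nat.sub_le _ _) j.isLt⟩) := by
    intro i j h
    rw [mul_apply]
    apply Finset.sum_eq_single (⟨(j : ℕ) - 1, lt_of_le_of_lt (Nat.sub_le _ _) j.isLt⟩ : Fin d)
    · intro k _ hk
      rw [conjTranspose_apply, hz j k (by intro hcon; exact hk (Fin.ext (show (k:ℕ) = (j:ℕ) - 1 by omega))), star_zero,
        mul_zero]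
    · intro hk; exact absurd (Finset.mem_univ _) hk
  have hXBH0 : ∀ (i j : Fin d), (j : ℕ) = 0 → (X * Bᴴ) i j = 0 := by
    intro i j h
    rw [mul_apply]
    apply Finset.sum_eq_zero
    intro k _
    rw [conjTranspose_apply, hz j k (by omega), star_zero, mul_zero]
  have hBHX : ∀ (i j : Fin d) (h : (i : ℕ) + 1 < d),
      (Bᴴ * X) i j = star (B ⟨(i : ℕ) + 1, h⟩ i) * X ⟨(i : ℕ) + 1, h⟩ j := by
    intro i j h
    rw [mul_apply]
    apply Finset.sum_eq_single (⟨(i : ℕ) + 1, h⟩ : Fin d)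
    · intro k _ hk
      rw [conjTranspose_apply, hz k i (by simpa [Fin.ext_iff] using hk), star_zero, zero_mul]
    · intro hk; exact absurd (Finset.mem_univ _) hk
  -- nonvanishing of subdiagonal entries, restated
  have hnz' : ∀ (i : Fin d) (h : 0 < (i : ℕ)),
      B i ⟨(i : ℕ) - 1, lt_of_le_of_lt (Nat.sub_le _ _) i.isLt⟩ ≠ 0 := by
    intro i h
    have := hnz ⟨(i : ℕ) - 1, lt_of_le_of_lt (Nat.sub_le _ _) i.isLt⟩ (by simp; omega)
    convert this using 2
    simp [Fin.ext_iff]; omega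
  -- upper part vanishes
  have upper : ∀ n : ℕ, ∀ i j : Fin d, (i : ℕ) = n → (i : ℕ) < (j : ℕ) → X i j = 0 := by
    intro n
    induction n with
    | zero =>
      intro i j hi hij
      have hj : 0 < (j : ℕ) := by omega
      set j' : Fin d := ⟨(j : ℕ) - 1, lt_of_le_of_lt (Nat.sub_le _ _) j.isLt⟩ with hj'
      have hj1 : (j' : ℕ) + 1 < d := by simp [hj']; omega
      have e : (X * B) i j' = (B * X) i j' := by rw [h1]
      rw [hXB i j' hj1, hBX0 i j' hi] at e
      have hjj : (⟨(j' : ℕ) + 1, hj1⟩ : Fin d) = j := by simp [Fin.ext_iff, hj']; omega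
      rw [hjj] at e
      exact (mul_eq_zero.mp e).resolve_right (by rw [← hjj] at *; exact hnz j' hj1)
    | succ n ih =>
      intro i j hi hij
      have hj : 0 < (j : ℕ) := by omega
      set i' : Fin d := ⟨(i : ℕ) - 1, lt_of_le_of_lt (Nat.sub_le _ _) i.isLt⟩ with hi'
      set j' : Fin d := ⟨(j : ℕ) - 1, lt_of_le_of_lt (Nat.sub_le _ _) j.isLt⟩ with hj'
      have hj1 : (j' : ℕ) + 1 < d := by simp [hj']; omega
      have e : (X * B) i j' = (B * X) i j' := by rw [h1]
      rw [hXB i j' hj1, hBX i j' (by omega)] at e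
      have hjj : (⟨(j' : ℕ) + 1, hj1⟩ : Fin d) = j := by simp [Fin.ext_iff, hj']; omega
      rw [hjj] at e
      have hX0 : X i' j' = 0 := ih i' j' (by simp [hi']; omega) (by simp [hi', hj']; omega)
      rw [hX0, mul_zero] at e
      exact (mul_eq_zero.mp e).resolve_right (by rw [← hjj] at *; exact hnz j' hj1)
  -- lower part vanishes
  have lower : ∀ n : ℕ, ∀ i j : Fin d, (j : ℕ) = n → (j : ℕ) < (i : ℕ) → X i j = 0 := by
    intro n
    induction n with
    | zero =>
      intro i j hj hij
      have hi : 0 < (i : ℕ) := by omega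
      set i' : Fin d := ⟨(i : ℕ) - 1, lt_of_le_of_lt (Nat.sub_le _ _) i.isLt⟩ with hi'
      have hi1 : (i' : ℕ) + 1 < d := by simp [hi']; omega
      have e : (X * Bᴴ) i' j = (Bᴴ * X) i' j := by rw [h2]
      rw [hXBH0 i' j hj, hBHX i' j hi1] at e
      have hii : (⟨(i' : ℕ) + 1, hi1⟩ : Fin d) = i := by simp [Fin.ext_iff, hi']; omega
      rw [hii] at e
      have hb : star (B i i') ≠ 0 := by
        rw [← hii]; simpa using hnz i' hi1
      exact ((mul_eq_zero.mp e.symm).resolve_left (by rw [← hii] at *; exact hb))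
    | succ n ih =>
      intro i j hj hij
      have hi : 0 < (i : ℕ) := by omega
      set i' : Fin d := ⟨(i : ℕ) - 1, lt_of_le_of_lt (Nat.sub_le _ _) i.isLt⟩ with hi'
      set j' : Fin d := ⟨(j : ℕ) - 1, lt_of_le_of_lt (Nat.sub_le _ _) j.isLt⟩ with hj'
      have hi1 : (i' : ℕ) + 1 < d := by simp [hi']; omega
      have e : (X * Bᴴ) i' j = (Bᴴ * X) i' j := by rw [h2]
      rw [hXBH i' j (by omega), hBHX i' j hi1] at e
      have hii : (⟨(i' : ℕ) + 1, hi1⟩ : Fin d) = i := by simp [Fin.ext_iff, hi']; omega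
      rw [hii] at e
      have hX0 : X i' j' = 0 := ih i' j' (by simp [hj']; omega) (by simp [hi', hj']; omega)
      rw [show (⟨(j : ℕ) - 1, lt_of_le_of_lt (Nat.sub_le _ _) j.isLt⟩ : Fin d) = j' from rfl,
        hX0, zero_mul] at e
      have hb : star (B i i') ≠ 0 := by
        rw [← hii]; simpa using hnz i' hi1
      exact ((mul_eq_zero.mp e.symm).resolve_left (by rw [← hii] at *; exact hb))
  -- diagonal is constant
  have h0 : (0 : ℕ) < d := hd
  have diag : ∀ n : ℕ, ∀ i : Fin d, (i : ℕ) = n → X i i = X ⟨0, h0⟩ ⟨0, h0⟩ := by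
    intro n
    induction n with
    | zero =>
      intro i hi
      have : i = ⟨0, h0⟩ := by simp [Fin.ext_iff, hi]
      rw [this]
    | succ n ih =>
      intro i hi
      set i' : Fin d := ⟨(i : ℕ) - 1, lt_of_le_of_lt (Nat.sub_le _ _) i.isLt⟩ with hi'
      have hi1 : (i' : ℕ) + 1 < d := by simp [hi']; omega
      have e : (X * B) i i' = (B * X) i i' := by rw [h1]
      rw [hXB i i' hi1, hBX i i' (by omega)] at e
      have hii : (⟨(i' : ℕ) + 1, hi1⟩ : Fin d) = i := by simp [Fin.ext_iff, hi']; omega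
      rw [hii] at e
      have hX : X i' i' = X ⟨0, h0⟩ ⟨0, h0⟩ := ih i' (by simp [hi']; omega)
      have hb : B i i' ≠ 0 := by rw [← hii]; exact hnz i' hi1
      have : X i i * B i i' = X ⟨0, h0⟩ ⟨0, h0⟩ * B i i' := by
        rw [e, hX]; ring
      exact mul_right_cancel₀ hb this
  refine ⟨X ⟨0, h0⟩ ⟨0, h0⟩, ?_⟩
  ext i j
  rcases lt_trichotomy (i : ℕ) (j : ℕ) with h | h | h
  · rw [upper (i : ℕ) i j rfl h]
    simp [Matrix.one_apply, Fin.ext_iff, Nat.ne_of_lt h]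
  · have : i = j := Fin.ext h
    subst this
    rw [diag (i : ℕ) i rfl]
    simp [Matrix.one_apply]
  · rw [lower (j : ℕ) i j rfl h]
    simp [Matrix.one_apply, Fin.ext_iff, (Nat.ne_of_lt h).symm]
end

section
/- Let d ≥ 2, let B̄ ∈ M_d(ℂ) be a ladder matrix with all subdiagonal entries nonzero, and suppose X ∈ M_d(ℂ) commutes with both B̄ and B̄†. Then for every k with 2 ≤ k ≤ d one has X_{k−1,k−1} = X_{k,k}; consequently all diagonal entries of X are equal to X_{1,1}. (Diagonal-entry step in the proof of Proposition 1.) -/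
open Matrix

/-- Diagonal-entry step in the proof of Proposition 1: if `X` commutes with a ladder
matrix `B̄` and with `B̄†`, then consecutive diagonal entries of `X` coincide, and hence
all diagonal entries of `X` equal the top-left entry.
(Rows and columns are indexed from `0` here.) -/
theorem ladder_commutant_diagonal {d : ℕ} (hd : 2 ≤ d)
    (B : Matrix (Fin d) (Fin d) ℂ) (hB : IsLadder B)
    (X : Matrix (Fin d) (Fin d) ℂ)
    (h1 : X * B = B * X) (h2 : X * Bᴴ = Bᴴ * X) :
    (∀ (k : Fin d) (h : (k : ℕ) + 1 < d),
        X k k = X ⟨(k : ℕ) + 1, h⟩ ⟨(k : ℕ) + 1, h⟩) ∧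
    (∀ k : Fin d, X k k = X ⟨0, by omega⟩ ⟨0, by omega⟩) := by
  have step : ∀ (k : Fin d) (h : (k : ℕ) + 1 < d),
      X k k = X ⟨(k : ℕ) + 1, h⟩ ⟨(k : ℕ) + 1, h⟩ := by
    intro k h
    have e := congrFun (congrFun h1 ⟨(k : ℕ) + 1, h⟩) k
    rw [mul_apply, mul_apply] at e
    have l1 : ∑ l, X ⟨(k : ℕ) + 1, h⟩ l * B l k
        = X ⟨(k : ℕ) + 1, h⟩ ⟨(k : ℕ) + 1, h⟩ * B ⟨(k : ℕ) + 1, h⟩ k := by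
      apply Finset.sum_eq_single
      · intro l _ hl
        have : (l : ℕ) ≠ (k : ℕ) + 1 := by
          intro hc; exact hl (Fin.ext hc)
        rw [hB.1 l k this, mul_zero]
      · intro hc; exact absurd (Finset.mem_univ _) hc
    have l2 : ∑ l, B ⟨(k : ℕ) + 1, h⟩ l * X l k
        = B ⟨(k : ℕ) + 1, h⟩ k * X k k := by
      apply Finset.sum_eq_single
      · intro l _ hl
        have : ((k : ℕ) + 1 : ℕ) ≠ (l : ℕ) + 1 := by
          intro hc
          exact hl (Fin.ext (by omega))
        rw [hB.1 _ l this, zero_mul]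
      · intro hc; exact absurd (Finset.mem_univ _) hc
    rw [l1, l2] at e
    have hb := hB.2 k h
    have e' : X ⟨(k : ℕ) + 1, h⟩ ⟨(k : ℕ) + 1, h⟩ * B ⟨(k : ℕ) + 1, h⟩ k
        = X k k * B ⟨(k : ℕ) + 1, h⟩ k := by rw [e]; ring
    exact (mul_right_cancel₀ hb e').symm
  refine ⟨step, ?_⟩
  have main : ∀ (n : ℕ) (hn : n < d),
      X ⟨n, hn⟩ ⟨n, hn⟩ = X ⟨0, by omega⟩ ⟨0, by omega⟩ := by
    intro n
    induction n with
    | zero => intro hn; rfl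
    | succ m ih =>
      intro hn
      have hm : m < d := by omega
      have := step ⟨m, hm⟩ hn
      rw [← this]
      exact ih hm
  intro k
  have := main (k : ℕ) k.2
  simpa using this
end

section
/- (Commutant-triviality content of Theorem 1.) Let d ≥ 1, let H ∈ M_d(ℂ) be Hermitian, and let {B_i}_{i ∈ I} be a finite family of matrices in M_d(ℂ). Suppose there exist complex coefficients α₀ and (α_i, β_i)_{i∈I} such that the matrix M = α₀·H + Σ_{i∈I} (α_i·B_i + β_i·B_i†), together with a unitary matrix U ∈ M_d(ℂ), satisfies: U·M·U† is a ladder matrix B̄ = Σ_{k=1}^{d−1} b_k E_{k+1,k} with all b_k ≠ 0, or U·M·U† is the conjugate transpose of such a ladder matrix. Then every X ∈ M_d(ℂ) that commutes with H, with every B_i, and with every B_i† is a scalar multiple of the identity: X = λ·1_d for some λ ∈ ℂ. -/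
open Matrix

lemma mul_ladder_apply {d : ℕ} {L Y : Matrix (Fin d) (Fin d) ℂ}
    (hL0 : ∀ i j : Fin d, (i : ℕ) ≠ (j : ℕ) + 1 → L i j = 0)
    (i j : Fin d) :
    (Y * L) i j = if h : (j : ℕ) + 1 < d then Y i ⟨(j:ℕ)+1, h⟩ * L ⟨(j:ℕ)+1, h⟩ j else 0 := by
  rw [Matrix.mul_apply]
  split
  · next h =>
    apply Finset.sum_eq_single (⟨(j:ℕ)+1, h⟩ : Fin d)
    · intro k _ hk
      rw [hL0 k j (fun hkj => hk (Fin.ext hkj)), mul_zero]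
    · intro hmem; exact absurd (Finset.mem_univ _) hmem
  · next h =>
    apply Finset.sum_eq_zero
    intro k _
    rw [hL0 k j (by have := k.isLt; omega), mul_zero]

lemma ladder_mul_apply {d : ℕ} {L Y : Matrix (Fin d) (Fin d) ℂ}
    (hL0 : ∀ i j : Fin d, (i : ℕ) ≠ (j : ℕ) + 1 → L i j = 0)
    (i j : Fin d) :
    (L * Y) i j = if h : 0 < (i : ℕ) then
      L i ⟨(i:ℕ)-1, Nat.lt_of_le_of_lt (Nat.sub_le _ _) i.isLt⟩ *
        Y ⟨(i:ℕ)-1, Nat.lt_of_le_of_lt (Nat.sub_le _ _) i.isLt⟩ j else 0 := by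
  rw [Matrix.mul_apply]
  split
  · next h =>
    apply Finset.sum_eq_single (⟨(i:ℕ)-1, Nat.lt_of_le_of_lt (Nat.sub_le _ _) i.isLt⟩ : Fin d)
    · intro k _ hk
      rw [hL0 i k (fun hik => hk (Fin.ext (by simp; omega))), zero_mul]
    · intro hmem; exact absurd (Finset.mem_univ _) hmem
  · next h =>
    apply Finset.sum_eq_zero
    intro k _
    rw [hL0 i k (by omega), zero_mul]

lemma ladder_upper_zero {d : ℕ} {L Y : Matrix (Fin d) (Fin d) ℂ}
    (hL : IsLadder L) (hcomm : Y * L = L * Y) :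
    ∀ i j : Fin d, (i:ℕ) < (j:ℕ) → Y i j = 0 := by
  obtain ⟨hL0, hLne⟩ := hL
  have key : ∀ n : ℕ, ∀ i j : Fin d, (i:ℕ) = n → (i:ℕ) < (j:ℕ) → Y i j = 0 := by
    intro n
    induction n with
    | zero =>
      intro i j hi hij
      have hj1 : ((⟨(j:ℕ)-1, Nat.lt_of_le_of_lt (Nat.sub_le _ _) j.isLt⟩ : Fin d) : ℕ) + 1 < d := by
        simp only []; have := j.isLt; omega
      have hrel := congrFun (congrFun hcomm i) ⟨(j:ℕ)-1, Nat.lt_of_le_of_lt (Nat.sub_le _ _) j.isLt⟩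
      rw [mul_ladder_apply hL0, ladder_mul_apply hL0] at hrel
      rw [dif_pos hj1, dif_neg (by omega)] at hrel
      have hjeq : (⟨((⟨(j:ℕ)-1, Nat.lt_of_le_of_lt (Nat.sub_le _ _) j.isLt⟩ : Fin d) : ℕ)+1, hj1⟩ : Fin d) = j :=
        Fin.ext (by simp; omega)
      rw [hjeq] at hrel
      have hLj : L j (⟨(j:ℕ)-1, Nat.lt_of_le_of_lt (Nat.sub_le _ _) j.isLt⟩ : Fin d) ≠ 0 := by
        rw [← hjeq]; exact hLne _ hj1
      exact (mul_eq_zero.mp hrel).resolve_right hLj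
    | succ n ih =>
      intro i j hi hij
      set j' : Fin d := ⟨(j:ℕ)-1, Nat.lt_of_le_of_lt (Nat.sub_le _ _) j.isLt⟩ with hj'
      have hj1 : ((j' : Fin d) : ℕ) + 1 < d := by have := j.isLt; simp [hj']; omega
      have hrel := congrFun (congrFun hcomm i) j'
      rw [mul_ladder_apply hL0, ladder_mul_apply hL0] at hrel
      rw [dif_pos hj1, dif_pos (by omega)] at hrel
      have hjeq : (⟨(j' : ℕ)+1, hj1⟩ : Fin d) = j := Fin.ext (by simp [hj']; omega)
      rw [hjeq] at hrel
      have hY0 : Y ⟨(i:ℕ)-1, Nat.lt_of_le_of_lt (Nat.sub_le _ _) i.isLt⟩ j' = 0 := by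
        apply ih _ _ (by simp; omega)
        simp [hj']; omega
      rw [hY0, mul_zero] at hrel
      have hLj : L j j' ≠ 0 := by rw [← hjeq]; exact hLne _ hj1
      exact (mul_eq_zero.mp hrel).resolve_right hLj
  intro i j hij
  exact key (i:ℕ) i j rfl hij

lemma ladder_diag_eq {d : ℕ} {L Y : Matrix (Fin d) (Fin d) ℂ}
    (hL : IsLadder L) (hcomm : Y * L = L * Y) (hd : 1 ≤ d) :
    ∀ i : Fin d, Y i i = Y ⟨0, hd⟩ ⟨0, hd⟩ := by
  obtain ⟨hL0, hLne⟩ := hL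
  have step : ∀ (j : Fin d) (h : (j:ℕ)+1 < d), Y ⟨(j:ℕ)+1, h⟩ ⟨(j:ℕ)+1, h⟩ = Y j j := by
    intro j h
    have hrel := congrFun (congrFun hcomm (⟨(j:ℕ)+1, h⟩ : Fin d)) j
    rw [mul_ladder_apply hL0, ladder_mul_apply hL0] at hrel
    rw [dif_pos h, dif_pos (by simp)] at hrel
    simp only [Fin.val_mk, add_tsub_cancel_right, Fin.eta] at hrel
    exact mul_right_cancel₀ (hLne j h) (by rw [hrel, mul_comm])
  have key : ∀ n : ℕ, ∀ i : Fin d, (i:ℕ) = n → Y i i = Y ⟨0, hd⟩ ⟨0, hd⟩ := by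
    intro n
    induction n with
    | zero =>
      intro i hi
      have : i = ⟨0, hd⟩ := Fin.ext hi
      rw [this]
    | succ n ih =>
      intro i hi
      have hn : n + 1 < d := hi ▸ i.isLt
      have hn' : n < d := by omega
      have hie : i = ⟨((⟨n, hn'⟩ : Fin d):ℕ)+1, by simpa using hn⟩ := Fin.ext (by simpa using hi)
      rw [hie, step ⟨n, hn'⟩ (by simpa using hn)]
      exact ih ⟨n, hn'⟩ rfl
  intro i; exact key (i:ℕ) i rfl

lemma ladder_commutant {d : ℕ} (hd : 1 ≤ d) {L Y : Matrix (Fin d) (Fin d) ℂ}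
    (hL : IsLadder L) (h1 : Y * L = L * Y) (h2 : Y * Lᴴ = Lᴴ * Y) :
    ∃ c : ℂ, Y = c • (1 : Matrix (Fin d) (Fin d) ℂ) := by
  have h2' : Yᴴ * L = L * Yᴴ := by
    have := congrArg conjTranspose h2
    simpa [Matrix.conjTranspose_mul] using this.symm
  refine ⟨Y ⟨0, hd⟩ ⟨0, hd⟩, ?_⟩
  ext i j
  rcases lt_trichotomy (i:ℕ) (j:ℕ) with h | h | h
  · rw [ladder_upper_zero hL h1 i j h]
    simp [Matrix.one_apply, Fin.ext_iff, Nat.ne_of_lt h]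
  · have : i = j := Fin.ext h
    subst this
    rw [ladder_diag_eq hL h1 hd i]
    simp [Matrix.one_apply]
  · have := ladder_upper_zero hL h2' j i h
    rw [Matrix.conjTranspose_apply] at this
    have : Y i j = 0 := by
      have := congrArg (starRingEnd ℂ) this
      simpa using this
    rw [this]
    simp [Matrix.one_apply, Fin.ext_iff, (Nat.ne_of_lt h).symm]

lemma conj_mul_conj {d : ℕ} {U P Q : Matrix (Fin d) (Fin d) ℂ} (hU2 : Uᴴ * U = 1) :
    (U * P * Uᴴ) * (U * Q * Uᴴ) = U * (P * Q) * Uᴴ := by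
  simp only [Matrix.mul_assoc]
  rw [← Matrix.mul_assoc Uᴴ U, hU2, Matrix.one_mul]

/-- Commutant-triviality content of Theorem 1: if some complex linear combination
`M = α₀ H + Σᵢ (αᵢ Bᵢ + βᵢ Bᵢ†)` is unitarily equivalent to a ladder matrix or to the
conjugate transpose of a ladder matrix, then the commutant `{H, Bᵢ, Bᵢ†}'` is trivial. -/
theorem theorem_one_commutant_trivial {d : ℕ} (hd : 1 ≤ d)
    {I : Type*} [Fintype I]
    (H : Matrix (Fin d) (Fin d) ℂ) (hH : H.IsHermitian)
    (B : I → Matrix (Fin d) (Fin d) ℂ)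
    (α₀ : ℂ) (α β : I → ℂ)
    (U : Matrix (Fin d) (Fin d) ℂ)
    (hU : U * Uᴴ = 1 ∧ Uᴴ * U = 1)
    (hM : IsLadder (U * (α₀ • H + ∑ i, (α i • B i + β i • (B i)ᴴ)) * Uᴴ) ∨
          IsLadder ((U * (α₀ • H + ∑ i, (α i • B i + β i • (B i)ᴴ)) * Uᴴ)ᴴ))
    (X : Matrix (Fin d) (Fin d) ℂ)
    (hXH : X * H = H * X)
    (hXB : ∀ i, X * B i = B i * X)
    (hXBd : ∀ i, X * (B i)ᴴ = (B i)ᴴ * X) :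
    ∃ c : ℂ, X = c • (1 : Matrix (Fin d) (Fin d) ℂ) := by
  set M : Matrix (Fin d) (Fin d) ℂ := α₀ • H + ∑ i, (α i • B i + β i • (B i)ᴴ) with hMdef
  have hXM : X * M = M * X := by
    simp only [hMdef, Matrix.mul_add, Matrix.add_mul, Matrix.mul_sum, Matrix.sum_mul,
      Matrix.mul_smul, Matrix.smul_mul, hXH, hXB, hXBd]
  have hXMH : X * Mᴴ = Mᴴ * X := by
    have hMH : Mᴴ = (starRingEnd ℂ) α₀ • H +
        ∑ i, ((starRingEnd ℂ) (α i) • (B i)ᴴ + (starRingEnd ℂ) (β i) • B i) := by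
      rw [hMdef, Matrix.conjTranspose_add, Matrix.conjTranspose_smul, hH.eq,
        Matrix.conjTranspose_sum]
      congr 1
      refine Finset.sum_congr rfl fun i _ => ?_
      rw [Matrix.conjTranspose_add, Matrix.conjTranspose_smul, Matrix.conjTranspose_smul,
        Matrix.conjTranspose_conjTranspose]
      rfl
    rw [hMH]
    simp only [Matrix.mul_add, Matrix.add_mul, Matrix.mul_sum, Matrix.sum_mul,
      Matrix.mul_smul, Matrix.smul_mul, hXH, hXB, hXBd]
  set Y : Matrix (Fin d) (Fin d) ℂ := U * X * Uᴴ with hYdef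
  set N : Matrix (Fin d) (Fin d) ℂ := U * M * Uᴴ with hNdef
  have hYN : Y * N = N * Y := by
    rw [hYdef, hNdef, conj_mul_conj hU.2, conj_mul_conj hU.2, hXM]
  have hYNH : Y * Nᴴ = Nᴴ * Y := by
    have hNH : Nᴴ = U * Mᴴ * Uᴴ := by
      simp [hNdef, Matrix.conjTranspose_mul, Matrix.mul_assoc]
    rw [hYdef, hNH, conj_mul_conj hU.2, conj_mul_conj hU.2, hXMH]
  have hY : ∃ c : ℂ, Y = c • (1 : Matrix (Fin d) (Fin d) ℂ) := by
    rcases hM with hL | hL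
    · exact ladder_commutant hd hL hYN hYNH
    · refine ladder_commutant hd hL hYNH ?_
      simpa using hYN
  obtain ⟨c, hc⟩ := hY
  refine ⟨c, ?_⟩
  have : Uᴴ * Y * U = X := by
    rw [hYdef]
    simp only [Matrix.mul_assoc]
    rw [← Matrix.mul_assoc Uᴴ U, hU.2, Matrix.one_mul, Matrix.mul_one]
  rw [← this, hc]
  simp only [Matrix.mul_smul, Matrix.smul_mul, Matrix.mul_one, hU.2]
end

section
/- Let d, m ≥ 1, let B̄ ∈ M_d(ℂ) be a ladder matrix (all subdiagonal entries b_1,…,b_{d−1} nonzero, all other entries zero), and let X = Σ_{i,j=1}^{d} E_{i,j} ⊗ λ_{i,j}·1_m ∈ M_{dm}(ℂ) be a matrix all of whose m×m blocks are scalar. If X commutes with both B̄ ⊗ 1_m and B̄† ⊗ 1_m, then the matrix Λ = (λ_{i,j}) ∈ M_d(ℂ) is a scalar multiple of 1_d, and hence X = λ·1_{dm} for some λ ∈ ℂ. (Second step of the induction in the proof of Proposition 2.) -/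
open Matrix Kronecker

/-- Second step of the induction in the proof of Proposition 2: if a matrix
`X = Λ ⊗ 1_m` with scalar `m × m` blocks commutes with `B̄ ⊗ 1_m` and `B̄† ⊗ 1_m`
for a ladder matrix `B̄ ∈ M_d(ℂ)`, then `Λ` is a scalar multiple of `1_d` and hence
`X` is a scalar multiple of `1_{dm}`. -/
theorem scalar_blocks_ladder_commutant {d m : ℕ} (hd : 1 ≤ d) (hm : 1 ≤ m)
    (B : Matrix (Fin d) (Fin d) ℂ) (hB : IsLadder B)
    (Λ : Matrix (Fin d) (Fin d) ℂ)
    (h1 : (Λ ⊗ₖ (1 : Matrix (Fin m) (Fin m) ℂ)) * (B ⊗ₖ (1 : Matrix (Fin m) (Fin m) ℂ))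
        = (B ⊗ₖ (1 : Matrix (Fin m) (Fin m) ℂ)) * (Λ ⊗ₖ (1 : Matrix (Fin m) (Fin m) ℂ)))
    (h2 : (Λ ⊗ₖ (1 : Matrix (Fin m) (Fin m) ℂ)) * (Bᴴ ⊗ₖ (1 : Matrix (Fin m) (Fin m) ℂ))
        = (Bᴴ ⊗ₖ (1 : Matrix (Fin m) (Fin m) ℂ)) * (Λ ⊗ₖ (1 : Matrix (Fin m) (Fin m) ℂ))) :
    ∃ c : ℂ, Λ = c • (1 : Matrix (Fin d) (Fin d) ℂ) ∧
      Λ ⊗ₖ (1 : Matrix (Fin m) (Fin m) ℂ)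
        = c • (1 : Matrix (Fin d × Fin m) (Fin d × Fin m) ℂ) := by
  have dek : ∀ P Q : Matrix (Fin d) (Fin d) ℂ,
      (P ⊗ₖ (1 : Matrix (Fin m) (Fin m) ℂ)) = (Q ⊗ₖ (1 : Matrix (Fin m) (Fin m) ℂ)) → P = Q := by
    intro P Q h
    ext i j
    have := congrFun (congrFun h (i, ⟨0, hm⟩)) (j, ⟨0, hm⟩)
    simpa [Matrix.kroneckerMap_apply, Matrix.one_apply] using this
  rw [← Matrix.mul_kronecker_mul, ← Matrix.mul_kronecker_mul, Matrix.one_mul] at h1 h2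
  have hC1 : Λ * B = B * Λ := dek _ _ h1
  have hC2 : Λ * Bᴴ = Bᴴ * Λ := dek _ _ h2
  obtain ⟨hB0, hBne⟩ := hB
  have hBne' : ∀ (j : ℕ) (hj0 : j < d) (hj1 : j + 1 < d),
      B ⟨j+1, hj1⟩ ⟨j, hj0⟩ ≠ 0 := fun j hj0 hj1 => hBne ⟨j, hj0⟩ hj1
  -- (Λ * B) i ⟨j⟩ = Λ i ⟨j+1⟩ * B ⟨j+1⟩ ⟨j⟩  whenever j+1 < d
  have key1 : ∀ (i : Fin d) (j : ℕ) (hj0 : j < d) (hj1 : j + 1 < d),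
      Λ i ⟨j+1, hj1⟩ * B ⟨j+1, hj1⟩ ⟨j, hj0⟩ = (B * Λ) i ⟨j, hj0⟩ := by
    intro i j hj0 hj1
    have h := congrFun (congrFun hC1 i) ⟨j, hj0⟩
    rw [Matrix.mul_apply] at h
    rw [← h]
    symm
    refine Finset.sum_eq_single (⟨j+1, hj1⟩ : Fin d) ?_ ?_
    · intro k _ hk
      have hkk : (k : ℕ) ≠ ((⟨j, hj0⟩ : Fin d) : ℕ) + 1 := by
        show (k : ℕ) ≠ j + 1
        intro h'
        exact hk (Fin.ext (by simpa using h'))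
      rw [hB0 k _ hkk, mul_zero]
    · intro h'
      exact absurd (Finset.mem_univ _) h'
  have rowB : ∀ (i j : Fin d), ((i : ℕ) = 0) → (B * Λ) i j = 0 := by
    intro i j hi
    rw [Matrix.mul_apply]
    refine Finset.sum_eq_zero fun k _ => ?_
    rw [hB0 i k (by omega), zero_mul]
  have rowB' : ∀ (j : Fin d) (i : ℕ) (hi0 : i < d) (hi1 : i + 1 < d),
      (B * Λ) ⟨i+1, hi1⟩ j = B ⟨i+1, hi1⟩ ⟨i, hi0⟩ * Λ ⟨i, hi0⟩ j := by
    intro j i hi0 hi1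
    rw [Matrix.mul_apply]
    refine Finset.sum_eq_single (⟨i, hi0⟩ : Fin d) ?_ ?_
    · intro k _ hk
      have hkk : ((⟨i+1, hi1⟩ : Fin d) : ℕ) ≠ (k : ℕ) + 1 := by
        show i + 1 ≠ (k : ℕ) + 1
        intro h'
        exact hk (Fin.ext (by simpa using h'.symm))
      rw [hB0 _ k hkk, zero_mul]
    · intro h'
      exact absurd (Finset.mem_univ _) h'
  -- column-zero fact from hC2 at column 0
  have col0 : ∀ (i : Fin d), (i : ℕ) ≠ 0 → Λ i ⟨0, hd⟩ = 0 := by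
    intro i hi
    obtain ⟨i', hi'⟩ : ∃ i' : ℕ, (i : ℕ) = i' + 1 := ⟨(i:ℕ)-1, by omega⟩
    have hi'd : i' + 1 < d := hi' ▸ i.isLt
    have hi'd2 : i' < d := by omega
    have h := congrFun (congrFun hC2 ⟨i', hi'd2⟩) ⟨0, hd⟩
    rw [Matrix.mul_apply, Matrix.mul_apply] at h
    have hL : ∑ k, Λ ⟨i', hi'd2⟩ k * Bᴴ k ⟨0, hd⟩ = 0 := by
      refine Finset.sum_eq_zero fun k _ => ?_
      have hz : B ⟨0, hd⟩ k = 0 := hB0 _ _ (by show (0:ℕ) ≠ (k:ℕ)+1; omega)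
      simp [Matrix.conjTranspose_apply, hz]
    rw [hL] at h
    have hR : ∑ k, Bᴴ ⟨i', hi'd2⟩ k * Λ k ⟨0, hd⟩
        = Bᴴ ⟨i', hi'd2⟩ ⟨i'+1, hi'd⟩ * Λ ⟨i'+1, hi'd⟩ ⟨0, hd⟩ := by
      refine Finset.sum_eq_single (⟨i'+1, hi'd⟩ : Fin d) ?_ ?_
      · intro k _ hk
        have hkk : (k : ℕ) ≠ ((⟨i', hi'd2⟩ : Fin d) : ℕ) + 1 := by
          show (k : ℕ) ≠ i' + 1
          intro h'
          exact hk (Fin.ext (by simpa using h'))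
        have hz : B k ⟨i', hi'd2⟩ = 0 := hB0 _ _ hkk
        simp [Matrix.conjTranspose_apply, hz]
      · intro h'
        exact absurd (Finset.mem_univ _) h'
    rw [hR] at h
    have hb : Bᴴ ⟨i', hi'd2⟩ ⟨i'+1, hi'd⟩ ≠ 0 := by
      simp only [Matrix.conjTranspose_apply, ne_eq, star_eq_zero]
      exact hBne' i' hi'd2 hi'd
    have hz : Λ ⟨i'+1, hi'd⟩ ⟨0, hd⟩ = 0 := by
      rcases mul_eq_zero.mp h.symm with h' | h'
      · exact absurd h' hb
      · exact h'
    have hie : i = ⟨i'+1, hi'd⟩ := Fin.ext (by simpa using hi')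
    rw [hie]; exact hz
  set c : ℂ := Λ ⟨0, hd⟩ ⟨0, hd⟩ with hc
  have main : ∀ n (i j : Fin d), (i : ℕ) = n →
      Λ i j = if (i : ℕ) = (j : ℕ) then c else 0 := by
    intro n
    induction n using Nat.strong_induction_on with
    | _ n ih =>
      intro i j hi
      rcases Nat.eq_zero_or_pos (i : ℕ) with h0 | hpos
      · rcases Nat.eq_zero_or_pos (j : ℕ) with j0 | jpos
        · have hie : i = ⟨0, hd⟩ := Fin.ext h0
          have hje : j = ⟨0, hd⟩ := Fin.ext j0
          rw [hie, hje, if_pos (by simp)]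
        · -- first row, j ≥ 1
          obtain ⟨j', hj'⟩ : ∃ j' : ℕ, (j : ℕ) = j' + 1 := ⟨(j:ℕ)-1, by omega⟩
          have hj'd : j' + 1 < d := hj' ▸ j.isLt
          have hj'd2 : j' < d := by omega
          have h := key1 i j' hj'd2 hj'd
          rw [rowB i ⟨j', hj'd2⟩ h0] at h
          have hz : Λ i ⟨j'+1, hj'd⟩ = 0 := by
            rcases mul_eq_zero.mp h with h' | h'
            · exact h'
            · exact absurd h' (hBne' j' hj'd2 hj'd)
          have hje : j = ⟨j'+1, hj'd⟩ := Fin.ext (by simpa using hj')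
          rw [hje, hz, if_neg (by simp; omega)]
      · rcases Nat.eq_zero_or_pos (j : ℕ) with j0 | jpos
        · have hje : j = ⟨0, hd⟩ := Fin.ext j0
          rw [hje, col0 i (by omega), if_neg (by simp; omega)]
        · obtain ⟨i', hi'⟩ : ∃ i' : ℕ, (i : ℕ) = i' + 1 := ⟨(i:ℕ)-1, by omega⟩
          obtain ⟨j', hj'⟩ : ∃ j' : ℕ, (j : ℕ) = j' + 1 := ⟨(j:ℕ)-1, by omega⟩
          have hi'd : i' + 1 < d := hi' ▸ i.isLt
          have hj'd : j' + 1 < d := hj' ▸ j.isLt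
          have hi'd2 : i' < d := by omega
          have hj'd2 : j' < d := by omega
          have h := key1 ⟨i'+1, hi'd⟩ j' hj'd2 hj'd
          rw [rowB' ⟨j', hj'd2⟩ i' hi'd2 hi'd] at h
          have hih := ih i' (by omega) ⟨i', hi'd2⟩ ⟨j', hj'd2⟩ rfl
          simp only [Fin.val_mk] at hih  -- if i' = j' then c else 0
          rw [hih] at h
          have hie : i = ⟨i'+1, hi'd⟩ := Fin.ext (by simpa using hi')
          have hje : j = ⟨j'+1, hj'd⟩ := Fin.ext (by simpa using hj')
          rw [hie, hje]
          by_cases heq : i' = j'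
          · subst heq
            rw [if_pos rfl] at h
            rw [if_pos (by simp)]
            apply mul_right_cancel₀ (hBne' i' hj'd2 hj'd)
            rw [h, mul_comm]
          · rw [if_neg heq, mul_zero] at h
            rw [if_neg (by simp; omega)]
            rcases mul_eq_zero.mp h with h' | h'
            · exact h'
            · exact absurd h' (hBne' j' hj'd2 hj'd)
  have hLam : Λ = c • (1 : Matrix (Fin d) (Fin d) ℂ) := by
    ext i j
    have hm := main (i : ℕ) i j rfl
    rw [hm]
    by_cases h : i = j
    · rw [if_pos (by rw [h]), h]
      simp [Matrix.one_apply]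
    · rw [if_neg (fun hh => h (Fin.ext hh))]
      simp [Matrix.one_apply, h]
  refine ⟨c, hLam, ?_⟩
  rw [hLam, Matrix.smul_kronecker, Matrix.one_kronecker_one]
end

section
/- (Commutant-triviality content of Corollary 2.) Let N ≥ 1 and d_1,…,d_N be positive integers, let H be a Hermitian matrix on ℂ^{d_1} ⊗ ⋯ ⊗ ℂ^{d_N}, and let {B_i}_{i∈I} be a finite family of matrices on the same space. Suppose there are a unitary U and N indices i_1,…,i_N ∈ I such that for each j ∈ {1,…,N}, U·B_{i_j}·U† = B̄^{(N)}_j or U·B_{i_j}·U† = (B̄^{(N)}_j)†, where B̄^{(N)}_j = 1 ⊗ ⋯ ⊗ B̄_j ⊗ ⋯ ⊗ 1 acts as a ladder matrix B̄_j ∈ M_{d_j}(ℂ) (all subdiagonal entries nonzero) on the j-th tensor factor and as the identity on the others. Then every matrix X that commutes with H, with every B_i, and with every B_i† equals λ·1 for some λ ∈ ℂ. -/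
open Matrix

namespace LadderAux
variable {d : ℕ} {B M : Matrix (Fin d) (Fin d) ℂ}

lemma sub_lt_d (a : Fin d) : (a : ℕ) - 1 < d :=
  lt_of_le_of_lt (Nat.sub_le _ _) a.isLt

lemma sum_mul_ladder (hB : IsLadder B) (f : Fin d → ℂ) (b : Fin d) :
    (∑ c, f c * B c b) =
      if h : (b : ℕ) + 1 < d then f ⟨(b : ℕ) + 1, h⟩ * B ⟨(b : ℕ) + 1, h⟩ b else 0 := by
  split_ifs with h
  · refine Finset.sum_eq_single _ (fun c _ hc => ?_) (by simp)
    have hcb : (c : ℕ) ≠ (b : ℕ) + 1 := fun hcb => hc (Fin.ext (by simpa using hcb))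
    rw [hB.1 c b hcb, mul_zero]
  · refine Finset.sum_eq_zero fun c _ => ?_
    have hcb : (c : ℕ) ≠ (b : ℕ) + 1 := fun hcb => h (hcb ▸ c.isLt)
    rw [hB.1 c b hcb, mul_zero]

lemma ladder_mul_sum (hB : IsLadder B) (f : Fin d → ℂ) (a : Fin d) :
    (∑ c, B a c * f c) =
      if _ : 0 < (a : ℕ) then B a ⟨(a : ℕ) - 1, sub_lt_d a⟩ * f ⟨(a : ℕ) - 1, sub_lt_d a⟩
      else 0 := by
  split_ifs with h
  · refine Finset.sum_eq_single _ (fun c _ hc => ?_) (by simp)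
    have hac : (a : ℕ) ≠ (c : ℕ) + 1 := by
      intro hac
      exact hc (Fin.ext (by simp only [Fin.val_mk]; omega))
    rw [hB.1 a c hac, zero_mul]
  · refine Finset.sum_eq_zero fun c _ => ?_
    have hac : (a : ℕ) ≠ (c : ℕ) + 1 := by omega
    rw [hB.1 a c hac, zero_mul]

lemma E1 (hB : IsLadder B) (h1 : M * B = B * M) (a b : Fin d) :
    (if h : (b : ℕ) + 1 < d then M a ⟨(b : ℕ) + 1, h⟩ * B ⟨(b : ℕ) + 1, h⟩ b else 0)
      = if _ : 0 < (a : ℕ) then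
          B a ⟨(a : ℕ) - 1, sub_lt_d a⟩ * M ⟨(a : ℕ) - 1, sub_lt_d a⟩ b
        else 0 := by
  have h := congrFun (congrFun h1 a) b
  rw [Matrix.mul_apply, Matrix.mul_apply, sum_mul_ladder hB (fun c => M a c) b,
    ladder_mul_sum hB (fun c => M c b) a] at h
  exact h

lemma E1' (hB : IsLadder B) (h1 : M * B = B * M) (a : Fin d) (k : ℕ) (hk : k + 1 < d) :
    M a ⟨k + 1, hk⟩ * B ⟨k + 1, hk⟩ ⟨k, Nat.lt_of_succ_lt hk⟩
      = if _ : 0 < (a : ℕ) then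
          B a ⟨(a : ℕ) - 1, sub_lt_d a⟩ * M ⟨(a : ℕ) - 1, sub_lt_d a⟩ ⟨k, Nat.lt_of_succ_lt hk⟩
        else 0 := by
  have h := E1 hB h1 a ⟨k, Nat.lt_of_succ_lt hk⟩
  rwa [dif_pos hk] at h

lemma offdiag_lt (hB : IsLadder B) (h1 : M * B = B * M) :
    ∀ n : ℕ, ∀ p q : Fin d, (p : ℕ) = n → (p : ℕ) < (q : ℕ) → M p q = 0 := by
  intro n
  induction n with
  | zero =>
    intro p q hp hpq
    have hq : (q : ℕ) - 1 + 1 < d := by have := q.isLt; omega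
    have e := E1' hB h1 p ((q : ℕ) - 1) hq
    rw [dif_neg (by omega)] at e
    have hq' : (⟨(q : ℕ) - 1 + 1, hq⟩ : Fin d) = q := Fin.ext (by simp only [Fin.val_mk]; omega)
    rw [hq'] at e
    have hβ : B q ⟨(q : ℕ) - 1, Nat.lt_of_succ_lt hq⟩ ≠ 0 := by
      have := hB.2 ⟨(q : ℕ) - 1, Nat.lt_of_succ_lt hq⟩ hq
      simpa only [hq'] using this
    exact (mul_eq_zero.1 e).resolve_right hβ
  | succ n ih =>
    intro p q hp hpq
    have hq : (q : ℕ) - 1 + 1 < d := by have := q.isLt; omega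
    have e := E1' hB h1 p ((q : ℕ) - 1) hq
    rw [dif_pos (by omega : 0 < (p : ℕ))] at e
    have hq' : (⟨(q : ℕ) - 1 + 1, hq⟩ : Fin d) = q := Fin.ext (by simp only [Fin.val_mk]; omega)
    rw [hq'] at e
    have hz : M ⟨(p : ℕ) - 1, sub_lt_d p⟩ ⟨(q : ℕ) - 1, Nat.lt_of_succ_lt hq⟩ = 0 :=
      ih _ _ (by simp only [Fin.val_mk]; omega) (by simp only [Fin.val_mk]; omega)
    rw [hz, mul_zero] at e
    have hβ : B q ⟨(q : ℕ) - 1, Nat.lt_of_succ_lt hq⟩ ≠ 0 := by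
      have := hB.2 ⟨(q : ℕ) - 1, Nat.lt_of_succ_lt hq⟩ hq
      simpa only [hq'] using this
    exact (mul_eq_zero.1 e).resolve_right hβ

lemma offdiag (hB : IsLadder B) (h1 : M * B = B * M) (h2 : Mᴴ * B = B * Mᴴ)
    (p q : Fin d) (h : p ≠ q) : M p q = 0 := by
  rcases lt_trichotomy (p : ℕ) (q : ℕ) with hlt | heq | hgt
  · exact offdiag_lt hB h1 _ p q rfl hlt
  · exact absurd (Fin.ext heq) h
  · have h3 := offdiag_lt hB h2 _ q p rfl hgt
    rw [Matrix.conjTranspose_apply] at h3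
    exact star_eq_zero.1 h3

lemma diag_adj (hB : IsLadder B) (h1 : M * B = B * M) (k : ℕ) (hk : k + 1 < d) :
    M ⟨k + 1, hk⟩ ⟨k + 1, hk⟩ = M ⟨k, Nat.lt_of_succ_lt hk⟩ ⟨k, Nat.lt_of_succ_lt hk⟩ := by
  have e := E1' hB h1 ⟨k + 1, hk⟩ k hk
  rw [dif_pos (by simp : 0 < ((⟨k + 1, hk⟩ : Fin d) : ℕ))] at e
  have hk' : (⟨((⟨k + 1, hk⟩ : Fin d) : ℕ) - 1, sub_lt_d _⟩ : Fin d)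
      = (⟨k, Nat.lt_of_succ_lt hk⟩ : Fin d) := Fin.ext (by simp)
  rw [hk'] at e
  exact mul_right_cancel₀ (hB.2 ⟨k, Nat.lt_of_succ_lt hk⟩ hk) (e.trans (mul_comm _ _))

lemma diag_const (hB : IsLadder B) (h1 : M * B = B * M) (a b : Fin d) :
    M a a = M b b := by
  have h0 : 0 < d := a.pos
  have key : ∀ n (hn : n < d), M ⟨n, hn⟩ ⟨n, hn⟩ = M ⟨0, h0⟩ ⟨0, h0⟩ := by
    intro n
    induction n with
    | zero => intro hn; rfl
    | succ n ih => intro hn; rw [diag_adj hB h1 n hn, ih (Nat.lt_of_succ_lt hn)]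
  have ha := key a.val a.isLt
  have hb := key b.val b.isLt
  simpa [Fin.eta] using ha.trans hb.symm




lemma sum_eq_sum_update {N : ℕ} {d : Fin N → ℕ} (j : Fin N)
    (y : (i : Fin N) → Fin (d i)) (f : ((i : Fin N) → Fin (d i)) → ℂ)
    (hf : ∀ z, z ≠ Function.update y j (z j) → f z = 0) :
    ∑ z, f z = ∑ a, f (Function.update y j a) := by
  have hinj : ∀ a ∈ (Finset.univ : Finset (Fin (d j))), ∀ b ∈ (Finset.univ : Finset (Fin (d j))),
      Function.update y j a = Function.update y j b → a = b := by
    intro a _ b _ hab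
    have := congrFun hab j
    simpa using this
  rw [← Finset.sum_image hinj]
  refine (Finset.sum_subset (Finset.subset_univ _) ?_).symm
  intro z _ hz
  refine hf z fun hzy => hz ?_
  exact Finset.mem_image.2 ⟨z j, Finset.mem_univ _, hzy.symm⟩

lemma slice_comm {N : ℕ} {d : Fin N → ℕ} (j : Fin N)
    (C : Matrix (Fin (d j)) (Fin (d j)) ℂ)
    (Cb Y : Matrix ((i : Fin N) → Fin (d i)) ((i : Fin N) → Fin (d i)) ℂ)
    (hCb : ∀ x y, Cb x y = C (x j) (y j) *
      ∏ i ∈ Finset.univ.erase j, (if x i = y i then (1 : ℂ) else 0))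
    (hY : Y * Cb = Cb * Y) (x y : (i : Fin N) → Fin (d i)) :
    (Matrix.of fun a b => Y (Function.update x j a) (Function.update y j b)) * C
      = C * Matrix.of fun a b => Y (Function.update x j a) (Function.update y j b) := by
  ext a b
  rw [Matrix.mul_apply, Matrix.mul_apply]
  simp only [Matrix.of_apply]
  have hbig := congrFun (congrFun hY (Function.update x j a)) (Function.update y j b)
  rw [Matrix.mul_apply, Matrix.mul_apply] at hbig
  have hL : (∑ z, Y (Function.update x j a) z * Cb z (Function.update y j b))
      = ∑ c, Y (Function.update x j a) (Function.update y j c) * C c b := by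
    rw [sum_eq_sum_update j y (fun z => Y (Function.update x j a) z * Cb z (Function.update y j b))
      (fun z hz => ?_)]
    · refine Finset.sum_congr rfl fun c _ => ?_
      rw [hCb, Finset.prod_eq_one fun i hi => if_pos (by
        have hij := Finset.ne_of_mem_erase hi
        rw [Function.update_of_ne hij, Function.update_of_ne hij]),
        Function.update_self, Function.update_self, mul_one]
    · have hex : ∃ i, i ≠ j ∧ z i ≠ y i := by
        by_contra hc
        push_neg at hc
        refine hz (funext fun i => ?_)
        by_cases hij : i = j
        · subst hij; rw [Function.update_self]
        · rw [Function.update_of_ne hij]; exact hc i hij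
      obtain ⟨i0, hi0, hne⟩ := hex
      beta_reduce
      have hprod : (∏ i ∈ Finset.univ.erase j,
          if z i = Function.update y j b i then (1 : ℂ) else 0) = 0 := by
        refine Finset.prod_eq_zero (Finset.mem_erase.2 ⟨hi0, Finset.mem_univ i0⟩) ?_
        have hc1 : z i0 ≠ Function.update y j b i0 := by
          rw [Function.update_of_ne hi0]; exact hne
        exact if_neg hc1
      rw [hCb, hprod, mul_zero, mul_zero]
  have hR : (∑ z, Cb (Function.update x j a) z * Y z (Function.update y j b))
      = ∑ c, C a c * Y (Function.update x j c) (Function.update y j b) := by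
    rw [sum_eq_sum_update j x (fun z => Cb (Function.update x j a) z * Y z (Function.update y j b))
      (fun z hz => ?_)]
    · refine Finset.sum_congr rfl fun c _ => ?_
      rw [hCb, Finset.prod_eq_one fun i hi => if_pos (by
        have hij := Finset.ne_of_mem_erase hi
        rw [Function.update_of_ne hij, Function.update_of_ne hij]),
        Function.update_self, Function.update_self, mul_one]
    · have hex : ∃ i, i ≠ j ∧ z i ≠ x i := by
        by_contra hc
        push_neg at hc
        refine hz (funext fun i => ?_)
        by_cases hij : i = j
        · subst hij; rw [Function.update_self]
        · rw [Function.update_of_ne hij]; exact hc i hij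
      obtain ⟨i0, hi0, hne⟩ := hex
      beta_reduce
      have hprod : (∏ i ∈ Finset.univ.erase j,
          if Function.update x j a i = z i then (1 : ℂ) else 0) = 0 := by
        refine Finset.prod_eq_zero (Finset.mem_erase.2 ⟨hi0, Finset.mem_univ i0⟩) ?_
        have hc1 : Function.update x j a i0 ≠ z i0 := by
          rw [Function.update_of_ne hi0]; exact fun e => hne e.symm
        exact if_neg hc1
      rw [hCb, hprod, mul_zero, zero_mul]
  exact hL.symm.trans (hbig.trans hR)


end LadderAux

/-- Commutant-triviality content of Corollary 2: on a tensor product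
`ℂ^{d₁} ⊗ ⋯ ⊗ ℂ^{d_N}` (matrices indexed by multi-indices), if `N` of the Lindblad
operators `B_{i₁}, …, B_{i_N}` are carried by a single unitary `U` onto the operators
`B̄⁽ᴺ⁾_j` or their conjugate transposes — where `B̄⁽ᴺ⁾_j` acts as a ladder matrix `B̄_j`
on the `j`-th factor and as the identity on the other factors — then the commutant
`{H, Bᵢ, Bᵢ† : i ∈ I}'` is trivial. -/


theorem corollary_two_commutant_trivial {N : ℕ} (hN : 1 ≤ N)
    (d : Fin N → ℕ) (hd : ∀ i, 1 ≤ d i)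
    {I : Type*} [Fintype I]
    (H : Matrix ((i : Fin N) → Fin (d i)) ((i : Fin N) → Fin (d i)) ℂ)
    (hH : H.IsHermitian)
    (B : I → Matrix ((i : Fin N) → Fin (d i)) ((i : Fin N) → Fin (d i)) ℂ)
    (Bbar : ∀ j : Fin N, Matrix (Fin (d j)) (Fin (d j)) ℂ)
    (hBbar : ∀ j, IsLadder (Bbar j))
    (Bbig : ∀ _ : Fin N,
      Matrix ((i : Fin N) → Fin (d i)) ((i : Fin N) → Fin (d i)) ℂ)
    (hBbig : ∀ (j : Fin N) (x y : (i : Fin N) → Fin (d i)),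
      Bbig j x y = Bbar j (x j) (y j) *
        ∏ i ∈ Finset.univ.erase j, (if x i = y i then (1 : ℂ) else 0))
    (U : Matrix ((i : Fin N) → Fin (d i)) ((i : Fin N) → Fin (d i)) ℂ)
    (hU : U * Uᴴ = 1 ∧ Uᴴ * U = 1)
    (ι : Fin N → I)
    (hι : ∀ j : Fin N,
      U * B (ι j) * Uᴴ = Bbig j ∨ U * B (ι j) * Uᴴ = (Bbig j)ᴴ)
    (X : Matrix ((i : Fin N) → Fin (d i)) ((i : Fin N) → Fin (d i)) ℂ)
    (hXH : X * H = H * X)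
    (hXB : ∀ i, X * B i = B i * X)
    (hXBd : ∀ i, X * (B i)ᴴ = (B i)ᴴ * X) :
    ∃ c : ℂ,
      X = c • (1 : Matrix ((i : Fin N) → Fin (d i)) ((i : Fin N) → Fin (d i)) ℂ) := by
  classical
  obtain ⟨hU1, hU2⟩ := hU
  set Y := U * X * Uᴴ with hYdef
  have key : ∀ P Q : Matrix ((i : Fin N) → Fin (d i)) ((i : Fin N) → Fin (d i)) ℂ,
      (U * P * Uᴴ) * (U * Q * Uᴴ) = U * (P * Q) * Uᴴ := by
    intro P Q
    have h : (U * P * Uᴴ) * (U * Q * Uᴴ) = U * P * (Uᴴ * U) * Q * Uᴴ := by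
      simp only [Matrix.mul_assoc]
    rw [h, hU2, Matrix.mul_one, Matrix.mul_assoc U P Q]
  have hYcomm : ∀ i, Y * (U * B i * Uᴴ) = (U * B i * Uᴴ) * Y := by
    intro i
    rw [hYdef, key, key, hXB i]
  have hYcommH : ∀ i, Y * (U * B i * Uᴴ)ᴴ = (U * B i * Uᴴ)ᴴ * Y := by
    intro i
    have hH' : (U * B i * Uᴴ)ᴴ = U * (B i)ᴴ * Uᴴ := by
      simp [Matrix.conjTranspose_mul, Matrix.mul_assoc]
    rw [hH', hYdef, key, key, hXBd i]
  have hYB : ∀ j, Y * Bbig j = Bbig j * Y ∧ Y * (Bbig j)ᴴ = (Bbig j)ᴴ * Y := by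
    intro j
    rcases hι j with h | h
    · exact ⟨h ▸ hYcomm (ι j), h ▸ hYcommH (ι j)⟩
    · constructor
      · have h2 := hYcommH (ι j)
        rw [h] at h2
        simpa using h2
      · exact h ▸ hYcomm (ι j)
  have hBbigH : ∀ (j : Fin N) (x y : (i : Fin N) → Fin (d i)),
      (Bbig j)ᴴ x y = (Bbar j)ᴴ (x j) (y j) *
        ∏ i ∈ Finset.univ.erase j, (if x i = y i then (1 : ℂ) else 0) := by
    intro j x y
    rw [Matrix.conjTranspose_apply, hBbig j y x, star_mul']
    rw [Matrix.conjTranspose_apply]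
    congr 1
    rw [star_prod]
    refine Finset.prod_congr rfl fun i _ => ?_
    by_cases h : x i = y i
    · rw [if_pos h, if_pos h.symm, star_one]
    · rw [if_neg h, if_neg (fun e => h e.symm), star_zero]
  have hslice : ∀ (j : Fin N) (x y : (i : Fin N) → Fin (d i)),
      (Matrix.of fun a b => Y (Function.update x j a) (Function.update y j b)) * Bbar j
        = Bbar j * Matrix.of fun a b => Y (Function.update x j a) (Function.update y j b) :=
    fun j x y => LadderAux.slice_comm j (Bbar j) (Bbig j) Y (hBbig j) (hYB j).1 x y
  have hsliceH : ∀ (j : Fin N) (x y : (i : Fin N) → Fin (d i)),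
      (Matrix.of fun a b => Y (Function.update x j a) (Function.update y j b))ᴴ * Bbar j
        = Bbar j * (Matrix.of fun a b => Y (Function.update x j a) (Function.update y j b))ᴴ := by
    intro j x y
    have h := LadderAux.slice_comm j (Bbar j)ᴴ (Bbig j)ᴴ Y (hBbigH j) (hYB j).2 x y
    have h' := congrArg Matrix.conjTranspose h
    simpa [Matrix.conjTranspose_mul] using h'.symm
  have hoff : ∀ x y, x ≠ y → Y x y = 0 := by
    intro x y hxy
    have hex : ∃ j, x j ≠ y j := by
      by_contra hc
      push_neg at hc
      exact hxy (funext hc)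
    obtain ⟨j, hj⟩ := hex
    have h0 := LadderAux.offdiag (hBbar j) (hslice j x y) (hsliceH j x y) (x j) (y j) hj
    simpa [Function.update_eq_self] using h0
  have hdiagkey : ∀ s : Finset (Fin N), ∀ x y : (i : Fin N) → Fin (d i),
      (∀ i, i ∉ s → x i = y i) → Y x x = Y y y := by
    intro s
    induction s using Finset.induction_on with
    | empty =>
      intro x y hxy
      have hxy' : x = y := funext fun i => hxy i (Finset.notMem_empty i)
      rw [hxy']
    | @insert j s hj ih =>
      intro x y hxy
      have h1 : Y x x = Y (Function.update x j (y j)) (Function.update x j (y j)) := by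
        have h2 := LadderAux.diag_const (hBbar j) (hslice j x x) (x j) (y j)
        simpa [Function.update_eq_self] using h2
      rw [h1]
      refine ih _ _ fun i hi => ?_
      by_cases hij : i = j
      · subst hij; rw [Function.update_self]
      · rw [Function.update_of_ne hij]
        exact hxy i (by simp [hij, hi])
  set x₀ : (i : Fin N) → Fin (d i) := fun i => ⟨0, hd i⟩ with hx₀
  refine ⟨Y x₀ x₀, ?_⟩
  have hYc : Y = Y x₀ x₀ • (1 : Matrix ((i : Fin N) → Fin (d i)) ((i : Fin N) → Fin (d i)) ℂ) := by
    ext x y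
    by_cases hxy : x = y
    · subst hxy
      rw [hdiagkey Finset.univ x x₀ (fun i hi => absurd (Finset.mem_univ i) hi)]
      simp [Matrix.one_apply]
    · rw [hoff x y hxy]
      simp [Matrix.one_apply, hxy]
  have hX : X = Uᴴ * Y * U := by
    rw [hYdef]
    have h : Uᴴ * (U * X * Uᴴ) * U = (Uᴴ * U) * X * (Uᴴ * U) := by
      simp only [Matrix.mul_assoc]
    rw [h, hU2, Matrix.one_mul, Matrix.mul_one]
  conv_lhs => rw [hX, hYc]
  rw [Matrix.mul_smul, Matrix.mul_one, Matrix.smul_mul, hU2]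
end
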